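/- Assume n ≥ 2; L is a real n×n matrix with L_ij ≤ 0 for i ≠ j and zero row sums, whose kernel is exactly the span of 1ₙ; R = diag(r₁,…,rₙ) with 0 < rᵢ ≤ r̂ for all i; every complex eigenvalue of L·R is real, 0 is a simple eigenvalue of L·R and every nonzero eigenvalue of L·R is positive; and α_max = max_i L_ii > 0. If (i) 0 < p < 2, (ii) 0 < κ₁ − κ₂ < 2κ₁/(3p), and τ satisfies 0 < τ < p·(κ₂ − p(κ₁−κ₂)) / (2·r̂·α_max·(κ₁ − p(κ₁−κ₂))²), then the synchronization condition holds: 1 is an eigenvalue of A of algebraic multiplicity exactly 2 and every other complex eigenvalue of A has modulus strictly less than 1. -/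

import Mathlib

open Matrix Polynomial

/-- The 3n×3n transition matrix of the skewless clock-synchronization algorithm. -/
noncomputable def Amat (n : ℕ) (τ κ₁ κ₂ p : ℝ) (L R : Matrix (Fin n) (Fin n) ℝ) :
    Matrix (Fin n ⊕ Fin n ⊕ Fin n) (Fin n ⊕ Fin n ⊕ Fin n) ℝ :=
  Matrix.fromBlocks 1 (Matrix.fromCols (τ • R) 0)
    (Matrix.fromRows ((-κ₁) • L) ((-p) • L))
    (Matrix.fromBlocks 1 ((-κ₂) • (1 : Matrix (Fin n) (Fin n) ℝ)) 0
      ((1 - p) • (1 : Matrix (Fin n) (Fin n) ℝ)))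

lemma quadRoot (b c : ℝ) (h1 : 0 < 1 + b + c) (h2 : 0 < 1 - b + c) (hc : c < 1)
    (lam : ℂ) (hroot : lam ^ 2 + b * lam + c = 0) : ‖lam‖ < 1 := by
  have key := hroot
  rw [← Complex.re_add_im lam] at key
  have hre := congrArg Complex.re key
  have him := congrArg Complex.im key
  simp [pow_two, Complex.add_re, Complex.add_im, Complex.mul_re, Complex.mul_im] at hre him
  set x := lam.re with hxdef
  set y := lam.im with hydef
  have him' : y * (2 * x + b) = 0 := by linear_combination him
  have habs2 : ‖lam‖ ^ 2 = x ^ 2 + y ^ 2 := by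
    rw [Complex.sq_norm, Complex.normSq_apply]; ring
  rcases mul_eq_zero.mp him' with hy0 | hxb
  · -- real root
    have hxeq : x ^ 2 + b * x + c = 0 := by
      rw [hy0] at hre; linear_combination hre
    have hxv : x * (-b - x) = c := by linear_combination -hxeq
    have hA : (1 - x) * (1 - (-b - x)) = 1 + b + c := by linear_combination -hxeq
    have hB : (1 + x) * (1 + (-b - x)) = 1 - b + c := by linear_combination -hxeq
    have hx1 : x < 1 := by
      by_contra hcon; push_neg at hcon
      have hv1 : 1 < -b - x := by
        by_contra hv; push_neg at hv
        nlinarith [hA, h1, mul_nonneg (by linarith : (0:ℝ) ≤ x - 1)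
          (by linarith : (0:ℝ) ≤ 1 - (-b - x))]
      nlinarith [hxv, hc, mul_nonneg (by linarith : (0:ℝ) ≤ x - 1)
        (by linarith : (0:ℝ) ≤ (-b - x) - 1)]
    have hx2 : -1 < x := by
      by_contra hcon; push_neg at hcon
      have hv1 : -b - x < -1 := by
        by_contra hv; push_neg at hv
        nlinarith [hB, h2, mul_nonneg (by linarith : (0:ℝ) ≤ -1 - x)
          (by linarith : (0:ℝ) ≤ 1 + (-b - x))]
      nlinarith [hxv, hc, mul_nonneg (by linarith : (0:ℝ) ≤ -1 - x)
        (by linarith : (0:ℝ) ≤ -1 - (-b - x))]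
    have hys : y ^ 2 = 0 := by rw [hy0]; ring
    have : ‖lam‖ ^ 2 < 1 := by rw [habs2, hys]; nlinarith
    nlinarith [norm_nonneg lam, this]
  · have hxb' : x = -b / 2 := by linarith
    have : ‖lam‖ ^ 2 = c := by
      rw [habs2]
      have hy2 : y ^ 2 = x ^ 2 + b * x + c := by linear_combination -hre
      rw [hy2, hxb']; ring
    nlinarith [norm_nonneg lam, this, hc]

lemma cubicSchur (a₂ a₁ a₀ : ℝ) (H1 : 0 < 1 + a₂ + a₁ + a₀) (H2 : 0 < 1 - a₂ + a₁ - a₀)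
    (HC : 0 < 1 - a₀ ^ 2 + a₀ * a₂ - a₁) (HE : |a₀| < 1)
    (lam : ℂ) (hroot : lam ^ 3 + a₂ * lam ^ 2 + a₁ * lam + a₀ = 0) :
    ‖lam‖ < 1 := by
  obtain ⟨hE1, hE2⟩ := abs_lt.mp HE
  have hf : Continuous fun t : ℝ => t ^ 3 + a₂ * t ^ 2 + a₁ * t + a₀ := by continuity
  have hiv := intermediate_value_Ioo (by norm_num : (-1 : ℝ) ≤ 1)
    (hf.continuousOn (s := Set.Icc (-1) 1))
  have h0mem : (0 : ℝ) ∈ Set.Ioo ((-1 : ℝ) ^ 3 + a₂ * (-1) ^ 2 + a₁ * (-1) + a₀)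
      ((1 : ℝ) ^ 3 + a₂ * 1 ^ 2 + a₁ * 1 + a₀) := by
    constructor <;> [nlinarith; nlinarith]
  obtain ⟨r, hrmem, hr0⟩ := hiv h0mem
  obtain ⟨hrm1, hr1⟩ := hrmem
  have hr0' : r ^ 3 + a₂ * r ^ 2 + a₁ * r + a₀ = 0 := hr0
  set b : ℝ := a₂ + r with hb
  set c : ℝ := a₁ + r * b with hcdef
  have ha2 : a₂ = b - r := by rw [hb]; ring
  have ha1 : a₁ = c - r * b := by rw [hcdef]; ring
  have ha0 : a₀ = -(r * c) := by rw [hcdef, hb]; linear_combination hr0'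
  have heq1 : 1 + a₂ + a₁ + a₀ = (1 - r) * (1 + b + c) := by
    rw [ha2, ha1, ha0]; ring
  have heq2 : 1 - a₂ + a₁ - a₀ = (1 + r) * (1 - b + c) := by
    rw [ha2, ha1, ha0]; ring
  have h1' : 0 < 1 + b + c := by
    by_contra hcon; push_neg at hcon
    nlinarith [H1, heq1, mul_nonneg (by linarith : (0:ℝ) ≤ 1 - r)
      (by linarith : (0:ℝ) ≤ -(1 + b + c))]
  have h2' : 0 < 1 - b + c := by
    by_contra hcon; push_neg at hcon
    nlinarith [H2, heq2, mul_nonneg (by linarith : (0:ℝ) ≤ 1 + r)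
      (by linarith : (0:ℝ) ≤ -(1 - b + c))]
  have hrc1 : r * c < 1 := by nlinarith [hE1, ha0]
  have hrc2 : -1 < r * c := by nlinarith [hE2, ha0]
  have hq : 0 < 1 + r * b + r ^ 2 * c := by
    rcases le_or_gt 0 r with hr | hr
    · nlinarith [mul_pos (by linarith : (0:ℝ) < 1 - r) (by linarith : (0:ℝ) < 1 - r * c),
        mul_le_mul_of_nonneg_left (by linarith : -(1 + c) ≤ b) hr]
    · nlinarith [mul_pos (by linarith : (0:ℝ) < 1 + r) (by linarith : (0:ℝ) < 1 + r * c),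
        mul_le_mul_of_nonpos_left (by linarith : b ≤ 1 + c) (by linarith : r ≤ 0)]
  have heqC : 1 - a₀ ^ 2 + a₀ * a₂ - a₁ = (1 - c) * (1 + r * b + r ^ 2 * c) := by
    rw [ha0, ha2, ha1]; ring
  have hc1 : c < 1 := by
    by_contra hcon; push_neg at hcon
    nlinarith [HC, heqC, hq, mul_nonneg (by linarith : (0:ℝ) ≤ c - 1) (le_of_lt hq)]
  have hfac : (lam - (r : ℂ)) * (lam ^ 2 + (b : ℂ) * lam + (c : ℂ)) = 0 := by
    have hb' : (a₂ : ℂ) = (b : ℂ) - (r : ℂ) := by rw [ha2]; push_cast; ring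
    have hc' : (a₁ : ℂ) = (c : ℂ) - (r : ℂ) * (b : ℂ) := by rw [ha1]; push_cast; ring
    have hd' : (a₀ : ℂ) = -((r : ℂ) * (c : ℂ)) := by rw [ha0]; push_cast; ring
    linear_combination hroot - lam ^ 2 * hb' - lam * hc' - hd'
  rcases mul_eq_zero.mp hfac with h | h
  · rw [sub_eq_zero] at h
    rw [h, Complex.norm_real, Real.norm_eq_abs]
    exact abs_lt.mpr ⟨hrm1, hr1⟩
  · exact quadRoot b c h1' h2' hc1 lam h

lemma charpoly_eval' {m : Type*} [Fintype m] [DecidableEq m] {R : Type*} [CommRing R]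
    (M : Matrix m m R) (x : R) :
    M.charpoly.eval x = (x • (1 : Matrix m m R) - M).det := by
  rw [Matrix.charpoly, ← Polynomial.coe_evalRingHom, RingHom.map_det]
  congr 1
  ext i j
  by_cases h : i = j
  · subst h; simp [charmatrix_apply_eq, Matrix.one_apply]
  · simp [charmatrix_apply_ne _ _ _ h, Matrix.one_apply, h]

lemma det_smul_one_add_smul {m : Type*} [Fintype m] [DecidableEq m]
    (N : Matrix m m ℂ) (α β : ℂ) :
    (α • (1 : Matrix m m ℂ) + β • N).det
      = ((N.charpoly.roots).map (fun μ => α + β * μ)).prod := by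
  have hmonic := N.charpoly_monic
  have hsplits : N.charpoly.Splits := IsAlgClosed.splits _
  have hcard : N.charpoly.roots.card = Fintype.card m := by
    rw [(Polynomial.splits_iff_card_roots).mp hsplits]
    exact charpoly_natDegree_eq_dim N
  by_cases hβ : β = 0
  · subst hβ
    rw [zero_smul, add_zero]
    have : ((N.charpoly.roots).map (fun μ => α + 0 * μ)).prod
        = ((N.charpoly.roots).map (fun _ => α)).prod := by
      congr 1; exact Multiset.map_congr rfl (by intro x _; ring)
    rw [this, Multiset.map_const', Multiset.prod_replicate, hcard, Matrix.det_smul, det_one,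
      mul_one]
  · have hβα : β * -(α/β) = -α := by field_simp
    have key : α • (1 : Matrix m m ℂ) + β • N = -(β • ((-(α/β)) • (1 : Matrix m m ℂ) - N)) := by
      rw [smul_sub, smul_smul, hβα]; module
    have hev : N.charpoly.eval (-(α/β))
        = ((N.charpoly.roots).map (fun a => (-(α/β)) - a)).prod := by
      conv_lhs => rw [hsplits.eq_prod_roots_of_monic hmonic]
      rw [Polynomial.eval_multiset_prod, Multiset.map_map]
      congr 1
      refine Multiset.map_congr rfl ?_
      intro x _
      simp [Function.comp]
    have h1 : ((-1 : ℂ) ^ Fintype.card m * β ^ Fintype.card m)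
        = ((N.charpoly.roots).map (fun _ => -β)).prod := by
      rw [Multiset.map_const', Multiset.prod_replicate, hcard, ← neg_one_mul β, mul_pow]
    rw [key, Matrix.det_neg, Matrix.det_smul, ← charpoly_eval' N (-(α/β)), hev, ← mul_assoc, h1,
      ← Multiset.prod_map_mul]
    congr 1
    refine Multiset.map_congr rfl ?_
    intro x _
    field_simp
    ring

lemma fromBlocks_sub {n m o l α : Type*} [Sub α] (A : Matrix n l α) (B : Matrix n m α)
    (C : Matrix o l α) (D : Matrix o m α) (A' : Matrix n l α) (B' : Matrix n m α)
    (C' : Matrix o l α) (D' : Matrix o m α) :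
    fromBlocks A B C D - fromBlocks A' B' C' D'
      = fromBlocks (A - A') (B - B') (C - C') (D - D') := by
  ext (i | i) (j | j) <;> simp

lemma step1 (n : ℕ) (τ κ₁ κ₂ p : ℝ) (L R : Matrix (Fin n) (Fin n) ℝ) (lam : ℂ) :
    lam • (1 : Matrix (Fin n ⊕ Fin n ⊕ Fin n) (Fin n ⊕ Fin n ⊕ Fin n) ℂ)
        - (Amat n τ κ₁ κ₂ p L R).map Complex.ofReal
      = fromBlocks ((lam - 1) • 1)
          (fromCols ((-(τ : ℂ)) • (R.map Complex.ofReal)) 0)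
          (fromRows ((κ₁ : ℂ) • (L.map Complex.ofReal)) ((p : ℂ) • (L.map Complex.ofReal)))
          (fromBlocks ((lam - 1) • 1) ((κ₂ : ℂ) • 1) 0 ((lam - 1 + p) • 1)) := by
  ext (i | i | i) (j | j | j) <;>
    simp [Amat, Matrix.map_apply, Matrix.one_apply, Matrix.fromCols, Matrix.fromRows,
      Matrix.fromBlocks, Matrix.of_apply, Sum.elim] <;>
    split_ifs <;> push_cast <;> ring

lemma detAmat (n : ℕ) (τ κ₁ κ₂ p : ℝ) (L R : Matrix (Fin n) (Fin n) ℝ) (lam : ℂ)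
    (h1 : lam ≠ 1) (h2 : lam ≠ 1 - (p : ℂ)) :
    (lam • (1 : Matrix (Fin n ⊕ Fin n ⊕ Fin n) (Fin n ⊕ Fin n ⊕ Fin n) ℂ)
        - (Amat n τ κ₁ κ₂ p L R).map Complex.ofReal).det
      = (((((L * R).map Complex.ofReal).charpoly.roots)).map (fun μ =>
          (lam - 1) ^ 2 * (lam - 1 + (p : ℂ))
            + (τ : ℂ) * μ * ((κ₁ : ℂ) * (lam - 1 + (p : ℂ)) - (p : ℂ) * (κ₂ : ℂ)))).prod := by
  have hN : (L * R).map Complex.ofReal = (L.map Complex.ofReal) * (R.map Complex.ofReal) := by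
    ext i j
    simp [Matrix.mul_apply, Matrix.map_apply]
  rw [step1, hN]
  set Lc := L.map Complex.ofReal with hLc
  set Rc := R.map Complex.ofReal with hRc
  set N := Lc * Rc with hNdef
  have ha : lam - 1 ≠ 0 := sub_ne_zero.mpr h1
  have hd : lam - 1 + (p : ℂ) ≠ 0 := by
    intro h
    exact h2 (by linear_combination h)
  haveI iA : Invertible ((lam - 1) • (1 : Matrix (Fin n) (Fin n) ℂ)) :=
    ⟨(lam - 1)⁻¹ • 1,
      by rw [Matrix.smul_mul, Matrix.one_mul, smul_smul]
         simp [inv_mul_cancel₀ ha, mul_inv_cancel₀ ha],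
      by rw [Matrix.smul_mul, Matrix.one_mul, smul_smul]
         simp [inv_mul_cancel₀ ha, mul_inv_cancel₀ ha]⟩
  have hinvA : ⅟((lam - 1) • (1 : Matrix (Fin n) (Fin n) ℂ)) = (lam - 1)⁻¹ • 1 :=
    invOf_eq_right_inv
      (by rw [Matrix.smul_mul, Matrix.one_mul, smul_smul]
          simp [mul_inv_cancel₀ ha])
  rw [Matrix.det_fromBlocks₁₁, hinvA]
  have m1 : ∀ c : ℝ, ((c : ℂ) • Lc) * ((lam - 1)⁻¹ • (1 : Matrix (Fin n) (Fin n) ℂ))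
      = (((lam - 1)⁻¹ * c : ℂ)) • Lc := by
    intro c
    rw [Matrix.mul_smul, Matrix.mul_one, smul_smul, mul_comm]
  have m2 : ∀ c e : ℝ, (((lam - 1)⁻¹ * (c : ℂ)) • Lc) * ((-(e : ℂ)) • Rc)
      = ((-(e * c) / (lam - 1) : ℂ)) • N := by
    intro c e
    have hs : ((lam - 1)⁻¹ * (c : ℂ)) * (-(e : ℂ)) = -((e : ℂ) * c) / (lam - 1) := by
      rw [neg_div, div_eq_mul_inv]
      ring
    rw [Matrix.smul_mul, Matrix.mul_smul, smul_smul, hs]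
  have hCAB : fromRows ((κ₁ : ℂ) • Lc) ((p : ℂ) • Lc)
        * ((lam - 1)⁻¹ • (1 : Matrix (Fin n) (Fin n) ℂ))
        * fromCols ((-(τ : ℂ)) • Rc) (0 : Matrix (Fin n) (Fin n) ℂ)
      = fromBlocks ((-(τ * κ₁) / (lam - 1) : ℂ) • N) (0 : Matrix (Fin n) (Fin n) ℂ)
          ((-(τ * p) / (lam - 1) : ℂ) • N) (0 : Matrix (Fin n) (Fin n) ℂ) := by
    rw [Matrix.fromRows_mul, m1 κ₁, m1 p, Matrix.fromRows_mul, Matrix.mul_fromCols,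
      Matrix.mul_fromCols, m2 κ₁ τ, m2 p τ, Matrix.mul_zero, Matrix.mul_zero,
      Matrix.fromRows_fromCols_eq_fromBlocks]
  rw [hCAB, fromBlocks_sub]
  have e1 : ((κ₂ : ℂ) • (1 : Matrix (Fin n) (Fin n) ℂ)) - 0 = (κ₂ : ℂ) • 1 := sub_zero _
  have e2 : (0 : Matrix (Fin n) (Fin n) ℂ) - ((-(τ * p) / (lam - 1) : ℂ)) • N
      = ((τ * p / (lam - 1) : ℂ)) • N := by
    rw [zero_sub, ← neg_smul]
    congr 1
    ring
  have e3 : ((lam - 1 + (p : ℂ)) • (1 : Matrix (Fin n) (Fin n) ℂ)) - 0 = (lam - 1 + (p : ℂ)) • 1 :=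
    sub_zero _
  have e4 : ((lam - 1) • (1 : Matrix (Fin n) (Fin n) ℂ)) - ((-(τ * κ₁) / (lam - 1) : ℂ)) • N
      = (lam - 1) • 1 + ((τ * κ₁ / (lam - 1) : ℂ)) • N := by
    rw [sub_eq_add_neg, ← neg_smul]
    congr 2
    ring
  rw [e1, e2, e3, e4]
  haveI iD : Invertible ((lam - 1 + (p : ℂ)) • (1 : Matrix (Fin n) (Fin n) ℂ)) :=
    ⟨(lam - 1 + (p : ℂ))⁻¹ • 1,
      by rw [Matrix.smul_mul, Matrix.one_mul, smul_smul]
         simp [inv_mul_cancel₀ hd, mul_inv_cancel₀ hd],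
      by rw [Matrix.smul_mul, Matrix.one_mul, smul_smul]
         simp [inv_mul_cancel₀ hd, mul_inv_cancel₀ hd]⟩
  have hinvD : ⅟((lam - 1 + (p : ℂ)) • (1 : Matrix (Fin n) (Fin n) ℂ))
      = (lam - 1 + (p : ℂ))⁻¹ • 1 :=
    invOf_eq_right_inv
      (by rw [Matrix.smul_mul, Matrix.one_mul, smul_smul]
          simp [mul_inv_cancel₀ hd])
  rw [Matrix.det_fromBlocks₂₂, hinvD]
  have hBDC : ((κ₂ : ℂ) • (1 : Matrix (Fin n) (Fin n) ℂ)) * ((lam - 1 + (p : ℂ))⁻¹ • 1)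
        * (((τ * p / (lam - 1) : ℂ)) • N)
      = ((κ₂ * τ * p / ((lam - 1) * (lam - 1 + (p : ℂ))) : ℂ)) • N := by
    have hs : ((κ₂ : ℂ) * (lam - 1 + (p : ℂ))⁻¹) * ((τ : ℂ) * p / (lam - 1))
        = (κ₂ : ℂ) * τ * p / ((lam - 1) * (lam - 1 + (p : ℂ))) := by
      rw [div_eq_mul_inv, div_eq_mul_inv, mul_inv]
      ring
    simp only [Matrix.smul_mul, Matrix.mul_smul, Matrix.one_mul, smul_smul]
    congr 1
    rw [div_eq_mul_inv, div_eq_mul_inv, mul_inv]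
    ring
  rw [hBDC]
  have hfin : (lam - 1) • (1 : Matrix (Fin n) (Fin n) ℂ) + ((τ * κ₁ / (lam - 1) : ℂ)) • N
      - ((κ₂ * τ * p / ((lam - 1) * (lam - 1 + (p : ℂ))) : ℂ)) • N
      = (lam - 1) • 1
        + ((τ * κ₁ / (lam - 1) - κ₂ * τ * p / ((lam - 1) * (lam - 1 + (p : ℂ))) : ℂ)) • N := by
    rw [add_sub_assoc, ← sub_smul]
  rw [hfin, det_smul_one_add_smul]
  have hcard : (N.charpoly.roots).card = n := by
    rw [(Polynomial.splits_iff_card_roots).mp (IsAlgClosed.splits _),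
      Matrix.charpoly_natDegree_eq_dim, Fintype.card_fin]
  simp only [Matrix.det_smul, det_one, mul_one, Fintype.card_fin]
  rw [show (lam - 1 : ℂ) ^ n = ((N.charpoly.roots).map (fun _ => lam - 1)).prod by
      rw [Multiset.map_const', Multiset.prod_replicate, hcard],
    show (lam - 1 + (p : ℂ)) ^ n = ((N.charpoly.roots).map (fun _ => lam - 1 + (p : ℂ))).prod by
      rw [Multiset.map_const', Multiset.prod_replicate, hcard],
    ← Multiset.prod_map_mul, ← Multiset.prod_map_mul]
  congr 1
  refine Multiset.map_congr rfl ?_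
  intro x _
  field_simp
lemma gersh {n : ℕ} (L : Matrix (Fin n) (Fin n) ℝ) (r : Fin n → ℝ) (rhat αmax : ℝ)
    (hoff : ∀ i j, i ≠ j → L i j ≤ 0) (hrow : ∀ i, ∑ j, L i j = 0) (hr : ∀ i, 0 < r i)
    (hrhat : ∀ i, r i ≤ rhat) (hmax : ∀ i, L i i ≤ αmax) (x : ℝ)
    (hroot : (L * Matrix.diagonal r).charpoly.IsRoot x) : x ≤ 2 * rhat * αmax := by
  have hdet : (x • (1 : Matrix (Fin n) (Fin n) ℝ) - L * Matrix.diagonal r).det = 0 := by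
    rw [← charpoly_eval']; exact hroot
  obtain ⟨v, hv0, hveq⟩ := (Matrix.exists_mulVec_eq_zero_iff).mpr hdet
  obtain ⟨j0, hj0⟩ := Function.ne_iff.mp hv0
  obtain ⟨i, -, hi⟩ := Finset.exists_max_image Finset.univ (fun j => |v j|)
    ⟨j0, Finset.mem_univ j0⟩
  have hi' : ∀ j, |v j| ≤ |v i| := fun j => hi j (Finset.mem_univ j)
  have hvip : 0 < |v i| := lt_of_lt_of_le (abs_pos.mpr hj0) (hi' j0)
  have hcomp : x * v i = ∑ j, L i j * r j * v j := by
    have h1 := congrFun hveq i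
    have h2 : (x • (1 : Matrix (Fin n) (Fin n) ℝ) - L * Matrix.diagonal r) *ᵥ v
        = x • v - (L * Matrix.diagonal r) *ᵥ v := by
      rw [Matrix.sub_mulVec, Matrix.smul_mulVec, Matrix.one_mulVec]
    rw [h2] at h1
    have h3 : ((L * Matrix.diagonal r) *ᵥ v) i = ∑ j, L i j * r j * v j := by
      simp [Matrix.mulVec, dotProduct, Matrix.mul_diagonal]
    simp only [Pi.sub_apply, Pi.smul_apply, Pi.zero_apply, smul_eq_mul] at h1
    rw [h3] at h1
    linarith [h1]
  have hLpos : 0 ≤ L i i := by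
    have h4 : L i i = ∑ j ∈ Finset.univ.erase i, (-L i j) := by
      have h5 := hrow i
      rw [← Finset.add_sum_erase _ _ (Finset.mem_univ i)] at h5
      rw [Finset.sum_neg_distrib]
      linarith [h5]
    rw [h4]
    exact Finset.sum_nonneg fun j hj => by
      have := hoff i j (Ne.symm (Finset.ne_of_mem_erase hj))
      linarith
  have hsum : ∑ j ∈ Finset.univ.erase i, (-L i j) = L i i := by
    have h5 := hrow i
    rw [← Finset.add_sum_erase _ _ (Finset.mem_univ i)] at h5
    rw [Finset.sum_neg_distrib]
    linarith [h5]
  have hmain : (x - L i i * r i) * v i = ∑ j ∈ Finset.univ.erase i, L i j * r j * v j := by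
    have h6 := hcomp
    rw [← Finset.add_sum_erase _ _ (Finset.mem_univ i)] at h6
    ring_nf
    ring_nf at h6
    linarith [h6]
  have habs : |x - L i i * r i| * |v i| ≤ (L i i * rhat) * |v i| := by
    rw [← abs_mul, hmain]
    calc |∑ j ∈ Finset.univ.erase i, L i j * r j * v j|
        ≤ ∑ j ∈ Finset.univ.erase i, |L i j * r j * v j| := Finset.abs_sum_le_sum_abs _ _
      _ ≤ ∑ j ∈ Finset.univ.erase i, (-L i j) * rhat * |v i| := by
          refine Finset.sum_le_sum fun j hj => ?_
          have hLij : L i j ≤ 0 := hoff i j (Ne.symm (Finset.ne_of_mem_erase hj))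
          rw [abs_mul, abs_mul]
          have h7 : |L i j| = -L i j := abs_of_nonpos hLij
          have h8 : |r j| = r j := abs_of_pos (hr j)
          rw [h7, h8]
          have h9 : r j * |v j| ≤ rhat * |v i| := by
            apply mul_le_mul (hrhat j) (hi' j) (abs_nonneg _)
            exact le_trans (le_of_lt (hr j)) (hrhat j)
          have h10 : 0 ≤ -L i j := by linarith
          nlinarith [mul_le_mul_of_nonneg_left h9 h10]
      _ = (∑ j ∈ Finset.univ.erase i, (-L i j)) * rhat * |v i| := by
          rw [Finset.sum_mul, Finset.sum_mul]
      _ = (L i i * rhat) * |v i| := by rw [hsum]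
  have habs' : |x - L i i * r i| ≤ L i i * rhat :=
    le_of_mul_le_mul_right habs hvip
  have hrhat0 : 0 < rhat := lt_of_lt_of_le (hr i) (hrhat i)
  have h11 := abs_le.mp habs'
  nlinarith [h11.2, hmax i, hr i, hrhat i, hLpos, hrhat0,
    mul_le_mul_of_nonneg_left (hrhat i) hLpos,
    mul_le_mul_of_nonneg_right (hmax i) (le_of_lt hrhat0)]

noncomputable def cub (τ κ₁ κ₂ p : ℝ) (μ : ℂ) : ℂ[X] :=
  X ^ 3 + C ((p : ℂ) - 3) * X ^ 2 + C ((3 : ℂ) - 2 * (p : ℂ) + (τ : ℂ) * μ * (κ₁ : ℂ)) * X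
    + C ((p : ℂ) - 1 - (τ : ℂ) * μ * ((κ₁ : ℂ) - (p : ℂ) * ((κ₁ : ℂ) - (κ₂ : ℂ))))

lemma cub_monic (τ κ₁ κ₂ p : ℝ) (μ : ℂ) : (cub τ κ₁ κ₂ p μ).Monic := by
  unfold cub
  monicity!

lemma cub_zero (τ κ₁ κ₂ p : ℝ) :
    cub τ κ₁ κ₂ p 0 = (X - C 1) ^ 2 * (X - C (1 - (p : ℂ))) := by
  unfold cub
  have : ((τ : ℂ) * 0 * (κ₁ : ℂ)) = 0 := by ring
  rw [this]
  have h2 : ((τ : ℂ) * 0 * ((κ₁ : ℂ) - (p : ℂ) * ((κ₁ : ℂ) - (κ₂ : ℂ)))) = 0 := by ring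
  rw [h2]
  simp only [Polynomial.C_sub, Polynomial.C_add, Polynomial.C_mul, Polynomial.C_1,
    map_ofNat, sub_zero, add_zero, map_zero]
  ring

lemma rootMult_prod (s : Multiset ℂ[X]) (hs : ∀ q ∈ s, q ≠ (0 : ℂ[X])) (x : ℂ) :
    rootMultiplicity x s.prod = (s.map (fun q => rootMultiplicity x q)).sum := by
  induction s using Multiset.induction_on with
  | empty =>
      simp only [Multiset.prod_zero, Multiset.map_zero, Multiset.sum_zero]
      exact Polynomial.rootMultiplicity_eq_zero (by simp [Polynomial.IsRoot])
  | cons a t ih =>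
      have ha : a ≠ 0 := hs a (Multiset.mem_cons_self a t)
      have ht : ∀ q ∈ t, q ≠ (0 : ℂ[X]) := fun q hq => hs q (Multiset.mem_cons_of_mem hq)
      have htprod : t.prod ≠ 0 := Multiset.prod_ne_zero (fun h0 => ht 0 h0 rfl)
      rw [Multiset.prod_cons, Polynomial.rootMultiplicity_mul (mul_ne_zero ha htprod),
        Multiset.map_cons, Multiset.sum_cons, ih ht]

lemma sumIf (s : Multiset ℂ) :
    (s.map (fun μ => if μ = (0 : ℂ) then (2 : ℕ) else 0)).sum = 2 * s.count 0 := by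
  induction s using Multiset.induction_on with
  | empty => simp
  | cons a t ih =>
      by_cases h : a = 0
      · simp [h, ih, Multiset.count_cons_self]
        omega
      · simp [h, ih, Multiset.count_cons_of_ne (Ne.symm h)]

lemma charpoly_Amat (n : ℕ) (τ κ₁ κ₂ p : ℝ) (L R : Matrix (Fin n) (Fin n) ℝ) :
    ((Amat n τ κ₁ κ₂ p L R).map Complex.ofReal).charpoly
      = ((((L * R).map Complex.ofReal).charpoly.roots).map (cub τ κ₁ κ₂ p)).prod := by
  apply Polynomial.eq_of_infinite_eval_eq
  have hsub : {x : ℂ | x ∉ ({1, 1 - (p : ℂ)} : Set ℂ)} ⊆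
      {x : ℂ | eval x ((Amat n τ κ₁ κ₂ p L R).map Complex.ofReal).charpoly
        = eval x ((((L * R).map Complex.ofReal).charpoly.roots).map (cub τ κ₁ κ₂ p)).prod} := by
    intro x hx
    simp only [Set.mem_insert_iff, Set.mem_singleton_iff, not_or, Set.mem_setOf_eq] at hx ⊢
    obtain ⟨hx1, hx2⟩ := hx
    rw [charpoly_eval', detAmat n τ κ₁ κ₂ p L R x hx1 hx2, Polynomial.eval_multiset_prod,
      Multiset.map_map]
    congr 1
    refine Multiset.map_congr rfl ?_
    intro μ _
    simp only [Function.comp_apply, cub, eval_add, eval_mul, eval_pow, eval_X, eval_C]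
    ring
  refine Set.Infinite.mono hsub ?_
  exact Set.Finite.infinite_compl ((Set.finite_singleton _).insert _)


/-- Topology-independent sufficient condition of Eq. (18) of the paper: combining
Theorem 3 with the Gershgorin bound `μ_max(LR) ≤ 2 α_max r̂`, the parameter conditions
(i) `0 < p < 2`, (ii) `0 < κ₁−κ₂ < 2κ₁/(3p)` and
`0 < τ < p(κ₂ − p(κ₁−κ₂))/(2 r̂ α_max (κ₁ − p(κ₁−κ₂))²)` guarantee the spectral
synchronization condition on `A`. -/
theorem stmt18 (n : ℕ) (hn : 2 ≤ n) (τ κ₁ κ₂ p : ℝ)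
    (L : Matrix (Fin n) (Fin n) ℝ)
    (hoff : ∀ i j : Fin n, i ≠ j → L i j ≤ 0)
    (hrow : ∀ i : Fin n, ∑ j, L i j = 0)
    (hker : ∀ v : Fin n → ℝ, L *ᵥ v = 0 → ∃ c : ℝ, v = fun _ => c)
    (r : Fin n → ℝ) (rhat : ℝ) (hr : ∀ i, 0 < r i) (hrhat : ∀ i, r i ≤ rhat)
    (R : Matrix (Fin n) (Fin n) ℝ) (hR : R = Matrix.diagonal r)
    (hreal : ∀ μ : ℂ, ((L * R).map Complex.ofReal).charpoly.IsRoot μ → μ.im = 0)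
    (hsimple : Polynomial.rootMultiplicity (0 : ℝ) (L * R).charpoly = 1)
    (hpos : ∀ μ : ℝ, (L * R).charpoly.IsRoot μ → μ ≠ 0 → 0 < μ)
    (αmax : ℝ) (hα : αmax = ⨆ i : Fin n, L i i) (hαpos : 0 < αmax)
    (hp0 : 0 < p) (hp2 : p < 2)
    (hκ : 0 < κ₁ - κ₂) (hκ' : κ₁ - κ₂ < 2 * κ₁ / (3 * p))
    (hτ0 : 0 < τ)
    (hτ : τ < p * (κ₂ - p * (κ₁ - κ₂)) /
      (2 * rhat * αmax * (κ₁ - p * (κ₁ - κ₂)) ^ 2)) :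
    Polynomial.rootMultiplicity (1 : ℂ)
      ((Amat n τ κ₁ κ₂ p L R).map Complex.ofReal).charpoly = 2 ∧
    ∀ μ : ℂ, ((Amat n τ κ₁ κ₂ p L R).map Complex.ofReal).charpoly.IsRoot μ →
      μ ≠ 1 → ‖μ‖ < 1 := by
  classical
  -- scalar bookkeeping
  have hi0 : (0 : ℕ) < n := by omega
  have hrhat0 : 0 < rhat := lt_of_lt_of_le (hr ⟨0, hi0⟩) (hrhat ⟨0, hi0⟩)
  set K : ℝ := κ₁ - p * (κ₁ - κ₂) with hKdef
  have hKne : K ≠ 0 := by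
    intro h
    rw [h] at hτ
    norm_num at hτ
    linarith
  have h3p : (κ₁ - κ₂) * (3 * p) < 2 * κ₁ :=
    (lt_div_iff₀ (by positivity : (0:ℝ) < 3 * p)).mp hκ'
  have hκ₁pos : 0 < κ₁ := by
    linarith [mul_pos hκ (by positivity : (0:ℝ) < 3 * p), h3p]
  have hKpos : 0 < K := by
    rw [hKdef]
    linarith [h3p, mul_pos hp0 hκ]
  have hden : 0 < 2 * rhat * αmax * K ^ 2 := by positivity
  have hnum : 0 < κ₂ - p * (κ₁ - κ₂) := by
    have h0 : 0 < p * (κ₂ - p * (κ₁ - κ₂)) / (2 * rhat * αmax * K ^ 2) := lt_trans hτ0 hτ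
    rcases div_pos_iff.mp h0 with ⟨hn', _⟩ | ⟨_, hd'⟩
    · rcases mul_pos_iff.mp hn' with ⟨_, h⟩ | ⟨hneg, _⟩
      · exact h
      · linarith
    · linarith
  have hτM : τ * (2 * rhat * αmax) * K ^ 2 < p * (κ₂ - p * (κ₁ - κ₂)) := by
    have := (lt_div_iff₀ hden).mp hτ
    linarith [this]
  -- the roots of the charpoly of L * R over ℂ
  set ρ := (((L * R).map Complex.ofReal).charpoly).roots with hρdef
  have hcc : ((L * R).map Complex.ofReal).charpoly = (L * R).charpoly.map Complex.ofRealHom :=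
    Matrix.charpoly_map (L * R) Complex.ofRealHom
  -- membership facts
  have hmem : ∀ μ ∈ ρ, μ.im = 0 ∧ (L * R).charpoly.IsRoot μ.re := by
    intro μ hμ
    have hroot : (((L * R).map Complex.ofReal).charpoly).IsRoot μ := isRoot_of_mem_roots hμ
    have him : μ.im = 0 := hreal μ hroot
    refine ⟨him, ?_⟩
    have hμeq : μ = ((μ.re : ℝ) : ℂ) := Complex.ext rfl (by simp [him])
    rw [hcc, hμeq] at hroot
    have h2 : Complex.ofRealHom ((L * R).charpoly.eval μ.re) = 0 := by
      rw [← Polynomial.eval₂_at_apply, ← Polynomial.eval_map]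
      exact hroot
    simpa using h2
  have hmem' : ∀ μ ∈ ρ, μ ≠ 0 → 0 < μ.re ∧ μ.re ≤ 2 * rhat * αmax := by
    intro μ hμ hμ0
    obtain ⟨him, hroot⟩ := hmem μ hμ
    have hre0 : μ.re ≠ 0 := by
      intro h
      exact hμ0 (Complex.ext h him)
    have hmax : ∀ i, L i i ≤ αmax := by
      intro i
      rw [hα]
      exact le_ciSup (f := fun i => L i i) (Set.Finite.bddAbove (Set.finite_range _)) i
    refine ⟨hpos μ.re hroot hre0, ?_⟩
    rw [hR] at hroot
    exact gersh L r rhat αmax hoff hrow hr hrhat hmax μ.re hroot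
  have hcount0 : ρ.count 0 = 1 := by
    rw [hρdef, Polynomial.count_roots, hcc]
    have h0 : (0 : ℂ) = Complex.ofRealHom (0 : ℝ) := by simp
    rw [h0, ← Polynomial.eq_rootMultiplicity_map Complex.ofReal_injective 0]
    exact hsimple
  have hpoly := charpoly_Amat n τ κ₁ κ₂ p L R
  have hcubne : ∀ μ : ℂ, cub τ κ₁ κ₂ p μ ≠ 0 := fun μ => (cub_monic τ κ₁ κ₂ p μ).ne_zero
  constructor
  · -- root multiplicity of 1 is exactly 2
    rw [hpoly, rootMult_prod _ (by
      intro q hq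
      obtain ⟨μ, _, rfl⟩ := Multiset.mem_map.mp hq
      exact hcubne μ), Multiset.map_map]
    have hcong : Multiset.map ((fun q => rootMultiplicity 1 q) ∘ cub τ κ₁ κ₂ p) ρ
        = Multiset.map (fun μ => if μ = (0 : ℂ) then (2 : ℕ) else 0) ρ := by
      refine Multiset.map_congr rfl ?_
      intro μ hμ
      simp only [Function.comp_apply]
      by_cases hμ0 : μ = 0
      · subst hμ0
        rw [if_pos rfl, cub_zero]
        have hne1 : ((X : ℂ[X]) - C 1) ^ 2 ≠ 0 := pow_ne_zero _ (X_sub_C_ne_zero 1)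
        have hne2 : ((X : ℂ[X]) - C (1 - (p : ℂ))) ≠ 0 := X_sub_C_ne_zero _
        rw [Polynomial.rootMultiplicity_mul (mul_ne_zero hne1 hne2),
          Polynomial.rootMultiplicity_X_sub_C_pow, Polynomial.rootMultiplicity_X_sub_C]
        have : (1 : ℂ) ≠ 1 - (p : ℂ) := by
          intro h
          have : (p : ℂ) = 0 := by linear_combination h
          exact (ne_of_gt hp0) (by exact_mod_cast this)
        rw [if_neg this]
      · rw [if_neg hμ0]
        apply Polynomial.rootMultiplicity_eq_zero
        intro hIs
        have hval : (cub τ κ₁ κ₂ p μ).eval 1 = (τ : ℂ) * μ * ((p : ℂ) * ((κ₁ : ℂ) - (κ₂ : ℂ))) := by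
          simp only [cub, eval_add, eval_mul, eval_pow, eval_X, eval_C]
          ring
        rw [Polynomial.IsRoot, hval] at hIs
        have hτp : (τ : ℂ) ≠ 0 := by exact_mod_cast ne_of_gt hτ0
        have hpδ : ((p : ℂ) * ((κ₁ : ℂ) - (κ₂ : ℂ))) ≠ 0 := by
          have : ((p * (κ₁ - κ₂) : ℝ) : ℂ) ≠ 0 := by
            exact_mod_cast ne_of_gt (mul_pos hp0 hκ)
          push_cast at this
          convert this using 2 <;> ring
        exact (mul_ne_zero (mul_ne_zero hτp hμ0) hpδ) hIs
    rw [hcong, sumIf, hcount0]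
  · -- all other roots strictly inside unit disk
    intro lam hroot hne1
    rw [hpoly] at hroot
    rw [Polynomial.IsRoot, Polynomial.eval_multiset_prod, Multiset.map_map] at hroot
    obtain ⟨μ, hμmem, hμeval⟩ := Multiset.mem_map.mp (Multiset.prod_eq_zero_iff.mp hroot)
    simp only [Function.comp_apply] at hμeval
    by_cases hμ0 : μ = 0
    · subst hμ0
      rw [cub_zero] at hμeval
      simp only [eval_mul, eval_pow, eval_sub, eval_X, eval_C] at hμeval
      rcases mul_eq_zero.mp hμeval with h | h
      · exact absurd (sub_eq_zero.mp (pow_eq_zero_iff (by norm_num) |>.mp h)) hne1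
      · have hlam : lam = 1 - (p : ℂ) := sub_eq_zero.mp h
        rw [hlam]
        have : (1 : ℂ) - (p : ℂ) = ((1 - p : ℝ) : ℂ) := by push_cast; ring
        rw [this, Complex.norm_real, Real.norm_eq_abs]
        exact abs_lt.mpr ⟨by linarith, by linarith⟩
    · -- positive real eigenvalue case: the Jury conditions
      obtain ⟨him, _⟩ := hmem μ hμmem
      obtain ⟨hx0, hxM⟩ := hmem' μ hμmem hμ0
      set x : ℝ := μ.re with hxdef
      have hμeq : μ = ((x : ℝ) : ℂ) := Complex.ext rfl (by simp [him])
      set t : ℝ := τ * x with htdef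
      have ht0 : 0 < t := mul_pos hτ0 hx0
      have htK : t * K ^ 2 < p * (κ₂ - p * (κ₁ - κ₂)) := by
        have h1 : τ * x * K ^ 2 ≤ τ * (2 * rhat * αmax) * K ^ 2 :=
          mul_le_mul_of_nonneg_right
            (mul_le_mul_of_nonneg_left hxM (le_of_lt hτ0)) (sq_nonneg K)
        calc t * K ^ 2 ≤ τ * (2 * rhat * αmax) * K ^ 2 := h1
          _ < p * (κ₂ - p * (κ₁ - κ₂)) := hτM
      have htKp : t * K < p := by
        have hKgt : κ₂ - p * (κ₁ - κ₂) < K := by rw [hKdef]; linarith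
        have h12 : (t * K) * K < p * K := by
          have e : (t * K) * K = t * K ^ 2 := by ring
          rw [e]
          exact lt_trans htK (by exact (mul_lt_mul_iff_right₀ hp0).mpr hKgt)
        exact lt_of_mul_lt_mul_right h12 (le_of_lt hKpos)
      -- the cubic equation satisfied by lam
      have hcubeval : lam ^ 3 + ((p - 3 : ℝ) : ℂ) * lam ^ 2
          + ((3 - 2 * p + t * κ₁ : ℝ) : ℂ) * lam + ((p - 1 - t * K : ℝ) : ℂ) = 0 := by
        rw [hμeq] at hμeval
        simp only [cub, eval_add, eval_mul, eval_pow, eval_X, eval_C] at hμeval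
        push_cast
        rw [htdef, hKdef]
        push_cast
        linear_combination hμeval
      apply cubicSchur (p - 3) (3 - 2 * p + t * κ₁) (p - 1 - t * K) ?_ ?_ ?_ ?_ lam hcubeval
      · -- H1
        have : 1 + (p - 3) + (3 - 2 * p + t * κ₁) + (p - 1 - t * K) = t * (p * (κ₁ - κ₂)) := by
          rw [hKdef]; ring
        rw [this]
        exact mul_pos ht0 (mul_pos hp0 hκ)
      · -- H2
        linarith [mul_pos ht0 hκ₁pos, mul_pos ht0 hKpos]
      · -- HC
        have hid : 1 - (p - 1 - t * K) ^ 2 + (p - 1 - t * K) * (p - 3) - (3 - 2 * p + t * κ₁)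
            = t * (p * (κ₂ - p * (κ₁ - κ₂)) - t * K ^ 2) := by
          rw [hKdef]; ring
        rw [hid]
        exact mul_pos ht0 (by linarith)
      · -- HE
        rw [abs_lt]
        constructor
        · linarith [htKp]
        · linarith [mul_pos ht0 hKpos]
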